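/- For every integer m ≥ 1 and every real p ∈ [0,1]: B(m+1; 2m+2, p) − B(m; 2m, p) = (2m choose m+1) · p^{m+1} (1−p)^{m+1} − (2m choose m) · p^{m+2} (1−p)^{m}. -/
import Mathlib


/-- Binomial cumulative distribution function:
`B(k; N, p) = ∑_{i=0}^{k} (N choose i) p^i (1-p)^(N-i)`. -/
noncomputable def binCdf (k N : ℕ) (p : ℝ) : ℝ :=
  ∑ i ∈ Finset.range (k + 1), (N.choose i : ℝ) * p ^ i * (1 - p) ^ (N - i)

/-- `g_N(p) = B(⌊N/2⌋; N, p)`. -/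
noncomputable def gN (N : ℕ) (p : ℝ) : ℝ := binCdf (N / 2) N p

lemma binCdf_succ_left (k N : ℕ) (p : ℝ) :
    binCdf (k + 1) N p = binCdf k N p +
      (N.choose (k + 1) : ℝ) * p ^ (k + 1) * (1 - p) ^ (N - (k + 1)) := by
  simp [binCdf, Finset.sum_range_succ]

lemma binCdf_succ_right (n k : ℕ) (hk : k ≤ n) (p : ℝ) :
    binCdf k (n + 1) p = binCdf k n p -
      (n.choose k : ℝ) * p ^ (k + 1) * (1 - p) ^ (n - k) := by
  induction k with
  | zero => simp [binCdf, pow_succ]; ring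
  | succ k ih =>
    have hk' : k ≤ n := Nat.le_of_succ_le hk
    rw [binCdf_succ_left k (n + 1) p, binCdf_succ_left k n p, ih hk']
    have h1 : n + 1 - (k + 1) = n - k := by omega
    have h2 : n - k = (n - (k + 1)) + 1 := by omega
    rw [h1, Nat.choose_succ_succ (n) (k), h2]
    push_cast
    ring
  
theorem binCdf_even_diff (m : ℕ) (hm : 1 ≤ m) (p : ℝ) (hp0 : 0 ≤ p) (hp1 : p ≤ 1) :
    binCdf (m + 1) (2 * m + 2) p - binCdf m (2 * m) p =
      ((2 * m).choose (m + 1) : ℝ) * p ^ (m + 1) * (1 - p) ^ (m + 1) -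
        ((2 * m).choose m : ℝ) * p ^ (m + 2) * (1 - p) ^ m := by
  have h1 : binCdf (m + 1) (2 * m + 2) p = binCdf (m + 1) (2 * m + 1) p -
      ((2 * m + 1).choose (m + 1) : ℝ) * p ^ (m + 2) * (1 - p) ^ m := by
    have := binCdf_succ_right (2 * m + 1) (m + 1) (by omega) p
    have e : 2 * m + 1 - (m + 1) = m := by omega
    rw [e] at this
    simpa using this
  have h2 : binCdf (m + 1) (2 * m + 1) p = binCdf (m + 1) (2 * m) p -
      ((2 * m).choose (m + 1) : ℝ) * p ^ (m + 2) * (1 - p) ^ (m - 1) := by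
    have := binCdf_succ_right (2 * m) (m + 1) (by omega) p
    have e : 2 * m - (m + 1) = m - 1 := by omega
    rw [e] at this
    simpa using this
  have h3 : binCdf (m + 1) (2 * m) p = binCdf m (2 * m) p +
      ((2 * m).choose (m + 1) : ℝ) * p ^ (m + 1) * (1 - p) ^ (m - 1) := by
    have := binCdf_succ_left m (2 * m) p
    have e : 2 * m - (m + 1) = m - 1 := by omega
    rw [e] at this
    exact this
  rw [h1, h2, h3]
  have hq : (1 - p) ^ m = (1 - p) ^ (m - 1) * (1 - p) := by
    conv_lhs => rw [show m = (m - 1) + 1 by omega, pow_succ]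
  have hch : ((2 * m + 1).choose (m + 1) : ℝ) =
      ((2 * m).choose m : ℝ) + ((2 * m).choose (m + 1) : ℝ) := by
    rw [Nat.choose_succ_succ (2 * m) m]
    push_cast; ring
  rw [hq, hch, pow_succ (1 - p) m, hq]
  ring
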